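/- Adhesive morphisms are stable under pushout: if m : C ⟶ A is adhesive and the square f : C ⟶ B, m : C ⟶ A, g : A ⟶ D, n : B ⟶ D is a pushout, then n is adhesive. -/
import Mathlib


open CategoryTheory Limits

universe v u

variable {C : Type u} [Category.{v} C]

/-- A pushout square is stable under pullback: every pullback of the square
along a morphism into the pushout vertex (i.e. a commutative cube over it whose
vertical faces are pullbacks) is again a pushout. -/
def IsStablePushout {W X Y Z : C} {f : W ⟶ X} {g : W ⟶ Y} {h : X ⟶ Z} {i : Y ⟶ Z}
    (_ : IsPushout f g h i) : Prop :=
  ∀ ⦃W' X' Y' Z' : C⦄ (f' : W' ⟶ X') (g' : W' ⟶ Y') (h' : X' ⟶ Z') (i' : Y' ⟶ Z')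
    (αW : W' ⟶ W) (αX : X' ⟶ X) (αY : Y' ⟶ Y) (αZ : Z' ⟶ Z),
    IsPullback f' αW αX f → IsPullback g' αW αY g →
    IsPullback h' αX αZ h → IsPullback i' αY αZ i →
    CommSq f' g' h' i' → IsPushout f' g' h' i'

/-- A morphism `m` is pre-adhesive if pushouts along `m` exist, are stable under
pullback, and are pullback squares. -/
def PreAdhesive {W X : C} (m : W ⟶ X) : Prop :=
  (∀ {Y : C} (f : W ⟶ Y), HasPushout m f) ∧
  ∀ {Y Z : C} (f : W ⟶ Y) (h : X ⟶ Z) (i : Y ⟶ Z) (H : IsPushout m f h i),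
    IsStablePushout H ∧ IsPullback m f h i

/-- A morphism is adhesive if every pullback of it is pre-adhesive. -/
def AdhesiveMorphism {W X : C} (m : W ⟶ X) : Prop :=
  ∀ {W' X' : C} (a : W' ⟶ W) (m' : W' ⟶ X') (b : X' ⟶ X),
    IsPullback a m' m b → PreAdhesive m'

/-- A pre-adhesive morphism is a monomorphism: its cokernel-pair square is a
pushout along it, hence a pullback, which forces monicity. -/
lemma PreAdhesive.mono {W X : C} {m : W ⟶ X} (h : PreAdhesive m) : Mono m := by
  haveI : HasPushout m m := h.1 m
  have CK : IsPushout m m (pushout.inl m m) (pushout.inr m m) := IsPushout.of_hasPushout m m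
  have hpb : IsPullback m m (pushout.inl m m) (pushout.inr m m) := (h.2 m _ _ CK).2
  exact ⟨fun α β w => hpb.hom_ext w w⟩

/-- In a pushout square whose first leg is an isomorphism, the opposite leg is
an isomorphism. -/
lemma isIso_of_isPushout_fst_isIso {W X Y Z : C} {f : W ⟶ X} {g : W ⟶ Y} {h : X ⟶ Z} {i : Y ⟶ Z}
    (H : IsPushout f g h i) [IsIso f] : IsIso i := by
  have w : f ≫ inv f ≫ g = g ≫ 𝟙 Y := by simp
  refine ⟨H.desc (inv f ≫ g) (𝟙 Y) w, H.inr_desc _ _ _, H.hom_ext ?_ ?_⟩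
  · rw [← Category.assoc, H.inl_desc, Category.comp_id, Category.assoc, ← H.w,
      IsIso.inv_hom_id_assoc]
  · rw [← Category.assoc, H.inr_desc, Category.id_comp, Category.comp_id]

/-- A pullback of a cospan consisting of one mono twice has iso projections. -/
lemma isIso_of_isPullback_self {W X A : C} {k l : W ⟶ X} {m : X ⟶ A} [Mono m]
    (h : IsPullback k l m m) : IsIso k := by
  have hkl : k = l := by rw [← cancel_mono m, h.w]
  refine ⟨h.lift (𝟙 X) (𝟙 X) rfl, ?_, h.lift_fst _ _ rfl⟩
  apply h.hom_ext
  · rw [Category.assoc, h.lift_fst, Category.comp_id, Category.id_comp]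
  · rw [Category.assoc, h.lift_snd, Category.comp_id, Category.id_comp, hkl]

/-- A section-style square over a mono is a pullback. -/
lemma isPullback_id_left_of_mono {W P X : C} {c : W ⟶ P} {p : P ⟶ X} {nn : W ⟶ X}
    [Mono p] (w : c ≫ p = nn) : IsPullback c (𝟙 W) p nn := by
  refine IsPullback.of_isLimit (PullbackCone.IsLimit.mk (by simp [w])
    (fun s => s.snd) (fun s => ?_) (fun s => Category.comp_id _)
    (fun s l h1 h2 => by simpa using h2))
  rw [← cancel_mono p, Category.assoc, w, s.condition]

/-- The first projection of a pullback of a mono is a mono. -/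
lemma mono_fst_of_isPullback {P X Y Z : C} {p₁ : P ⟶ X} {p₂ : P ⟶ Y} {h : X ⟶ Z} {i : Y ⟶ Z}
    (S : IsPullback p₁ p₂ h i) [Mono i] : Mono p₁ := by
  refine ⟨fun α β w => S.hom_ext w ?_⟩
  have hw : α ≫ p₁ ≫ h = β ≫ p₁ ≫ h := by rw [← Category.assoc, w, Category.assoc]
  rwa [S.w, ← Category.assoc, ← Category.assoc, cancel_mono i] at hw

/-- The kernel-pair face used to pull back a pushout square along the second leg
of its own kernel pair. -/
lemma kernel_face {X₁ A₁ Y Z K Wc : C} {m₁ : X₁ ⟶ A₁} {fu : X₁ ⟶ Y} {gh : A₁ ⟶ Z} {i : Y ⟶ Z}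
    {ι₁ ι₂ : K ⟶ Y} {ρ₁ : Wc ⟶ X₁} {ρ₂ : Wc ⟶ K}
    (Bpb : IsPullback m₁ fu gh i) (FK : IsPullback ι₁ ι₂ i i) (FW : IsPullback ρ₁ ρ₂ fu ι₁) :
    ∃ f' : Wc ⟶ X₁, f' ≫ fu = ρ₂ ≫ ι₂ ∧ IsPullback f' ρ₁ m₁ m₁ := by
  have wf' : (ρ₁ ≫ m₁) ≫ gh = (ρ₂ ≫ ι₂) ≫ i := by
    rw [Category.assoc, Bpb.w, ← Category.assoc, FW.w, Category.assoc, Category.assoc, FK.w]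
  refine ⟨Bpb.lift _ _ wf', Bpb.lift_snd _ _ wf', ?_⟩
  have hfm : Bpb.lift _ _ wf' ≫ m₁ = ρ₁ ≫ m₁ := Bpb.lift_fst _ _ wf'
  have hfu : Bpb.lift _ _ wf' ≫ fu = ρ₂ ≫ ι₂ := Bpb.lift_snd _ _ wf'
  refine IsPullback.of_isLimit (PullbackCone.IsLimit.mk hfm (fun s => ?lift)
    (fun s => ?fl) (fun s => ?fr) (fun s l h1 h2 => ?u)
    (fst := Bpb.lift _ _ wf') (snd := ρ₁))
  case lift =>
    have wk : (s.snd ≫ fu) ≫ i = (s.fst ≫ fu) ≫ i := by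
      rw [Category.assoc, ← Bpb.w, ← Category.assoc, ← s.condition, Category.assoc, Bpb.w,
        ← Category.assoc]
    exact FW.lift s.snd (FK.lift (s.snd ≫ fu) (s.fst ≫ fu) wk)
      (by rw [IsPullback.lift_fst])
  case fl =>
    apply Bpb.hom_ext
    · rw [Category.assoc, hfm, ← Category.assoc, IsPullback.lift_fst, s.condition]
    · rw [Category.assoc, hfu, ← Category.assoc, IsPullback.lift_snd, IsPullback.lift_snd]
  case fr => exact FW.lift_fst _ _ _
  case u =>
    apply FW.hom_ext
    · rw [IsPullback.lift_fst, h2]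
    · rw [IsPullback.lift_snd]
      apply FK.hom_ext
      · rw [IsPullback.lift_fst, Category.assoc, ← FW.w, ← Category.assoc, h2]
      · rw [IsPullback.lift_snd, Category.assoc, ← hfu, ← Category.assoc, h1]

/-- Adhesive morphisms are stable under pushout. -/
theorem adhesive_of_pushout_adhesive [HasPullbacks C] {A B D X : C}
    (m : X ⟶ A) (f : X ⟶ B) (g : A ⟶ D) (n : B ⟶ D)
    (hm : AdhesiveMorphism m) (H : IsPushout m f g n) :
    AdhesiveMorphism n := by
  intro W' X' a n' b hpb
  -- `m` itself is pre-adhesive (pull it back along identities).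
  have preM : PreAdhesive m :=
    hm (𝟙 X) m (𝟙 A) (IsPullback.of_horiz_isIso ⟨by simp⟩)
  obtain ⟨stabH, -⟩ := preM.2 f g n H
  -- Pull the pushout square `H` back along `b : X' ⟶ D`.
  have FA : IsPullback (pullback.fst g b) (pullback.snd g b) g b := IsPullback.of_hasPullback g b
  have FX : IsPullback (pullback.fst (m ≫ g) b) (pullback.snd (m ≫ g) b) (m ≫ g) b :=
    IsPullback.of_hasPullback (m ≫ g) b
  set pA := pullback.fst g b with hpA
  set gA := pullback.snd g b with hgA
  set pX := pullback.fst (m ≫ g) b with hpX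
  set q := pullback.snd (m ≫ g) b with hq
  obtain ⟨m₁, hm₁A, hm₁g⟩ : ∃ m₁, m₁ ≫ pA = pX ≫ m ∧ m₁ ≫ gA = q :=
    ⟨FA.lift (pX ≫ m) q (by rw [Category.assoc, FX.w]), FA.lift_fst _ _ _, FA.lift_snd _ _ _⟩
  obtain ⟨f₁, hf₁a, hf₁n⟩ : ∃ f₁, f₁ ≫ a = pX ≫ f ∧ f₁ ≫ n' = q :=
    ⟨hpb.lift (pX ≫ f) q (by rw [Category.assoc, ← H.w, FX.w]),
      hpb.lift_fst _ _ _, hpb.lift_snd _ _ _⟩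
  -- The vertical faces of the cube over `H`.
  have Fm : IsPullback m₁ pX pA m := by
    refine IsPullback.of_right ?_ hm₁A FA.flip
    rw [hm₁g]
    exact FX.flip
  have Ff : IsPullback f₁ pX a f := by
    refine IsPullback.of_right ?_ hf₁a hpb.flip
    rw [hf₁n, ← H.w]
    exact FX.flip
  -- The pulled-back square is a pushout along `m₁`, which is a pullback of `m`.
  have L : IsPushout m₁ f₁ gA n' :=
    stabH m₁ f₁ gA n' pX pA a b Fm Ff FA.flip hpb.flip ⟨hm₁g.trans hf₁n.symm⟩
  have preM₁ : PreAdhesive m₁ := hm pX m₁ pA Fm.flip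
  haveI monoM₁ : Mono m₁ := preM₁.mono
  obtain ⟨hasP₁, props₁⟩ := preM₁
  obtain ⟨stabL, pbL⟩ := props₁ f₁ gA n' L
  refine ⟨?_, ?_⟩
  · -- Existence of pushouts along `n'`: paste with `L`.
    intro Y u
    haveI : HasPushout m₁ (f₁ ≫ u) := hasP₁ _
    have B₀ : IsPushout m₁ (f₁ ≫ u) (pushout.inl m₁ (f₁ ≫ u)) (pushout.inr m₁ (f₁ ≫ u)) :=
      IsPushout.of_hasPushout _ _
    have wt : m₁ ≫ pushout.inl m₁ (f₁ ≫ u) = f₁ ≫ u ≫ pushout.inr m₁ (f₁ ≫ u) := by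
      rw [B₀.w, Category.assoc]
    have e : gA ≫ L.desc (pushout.inl m₁ (f₁ ≫ u)) (u ≫ pushout.inr m₁ (f₁ ≫ u)) wt =
        pushout.inl m₁ (f₁ ≫ u) := L.inl_desc _ _ _
    rw [← e] at B₀
    exact (IsPushout.of_top B₀ (L.inr_desc _ _ _) L).hasPushout
  · -- Stability and pullback properties of pushouts along `n'`.
    intro Y Z u h i R
    have Bpo : IsPushout m₁ (f₁ ≫ u) (gA ≫ h) i := L.paste_vert R
    obtain ⟨stabB, pbB⟩ := props₁ (f₁ ≫ u) (gA ≫ h) i Bpo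
    constructor
    · -- Stability: pull back the two halves of the pasting separately.
      intro W'' X'' Y'' Z'' n'' u'' h'' i'' αW αX αY αZ Fn Fu Fh Fi comm''
      have FA'' : IsPullback (pullback.fst gA αX) (pullback.snd gA αX) gA αX :=
        IsPullback.of_hasPullback gA αX
      set αA := pullback.fst gA αX with hαA
      set gA'' := pullback.snd gA αX with hgA''
      have FX'' : IsPullback (pullback.fst n'' gA'') (pullback.snd n'' gA'') n'' gA'' :=
        IsPullback.of_hasPullback n'' gA''
      set f₁'' := pullback.fst n'' gA'' with hf₁''
      set m₁'' := pullback.snd n'' gA'' with hm₁''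
      obtain ⟨α₁, hα₁m, hα₁f⟩ : ∃ α₁, α₁ ≫ m₁ = m₁'' ≫ αA ∧ α₁ ≫ f₁ = f₁'' ≫ αW :=
        ⟨pbL.lift (m₁'' ≫ αA) (f₁'' ≫ αW)
          (by rw [Category.assoc, FA''.w, ← Category.assoc, ← FX''.w, Category.assoc, Fn.w,
              ← Category.assoc]),
          pbL.lift_fst _ _ _, pbL.lift_snd _ _ _⟩
      have F1 : IsPullback m₁'' α₁ αA m₁ := by
        refine IsPullback.of_bot ?_ hα₁m.symm pbL
        have := FX''.flip.paste_vert Fn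
        rwa [← hα₁f, ← FA''.w] at this
      have F2 : IsPullback f₁'' α₁ αW f₁ := by
        refine IsPullback.of_bot ?_ hα₁f.symm pbL.flip
        have := FX''.paste_vert FA''.flip
        rwa [← hα₁m, Fn.w] at this
      have Ltop : IsPushout m₁'' f₁'' gA'' n'' :=
        stabL m₁'' f₁'' gA'' n'' α₁ αA αW αX F1 F2 FA''.flip Fn ⟨FX''.w.symm⟩
      have Btop : IsPushout m₁'' (f₁'' ≫ u'') (gA'' ≫ h'') i'' := by
        refine stabB m₁'' (f₁'' ≫ u'') (gA'' ≫ h'') i'' α₁ αA αY αZ F1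
          (F2.paste_horiz Fu) (FA''.flip.paste_horiz Fh) Fi ⟨?_⟩
        rw [← Category.assoc, FX''.w.symm, Category.assoc, Category.assoc, comm''.w]
      exact IsPushout.of_top Btop comm''.w Ltop
    · -- The pushout square along `n'` is a pullback.
      -- First, `i` is a mono: pull `Bpo` back along `i` using its kernel pair.
      have FK : IsPullback (pullback.fst i i) (pullback.snd i i) i i :=
        IsPullback.of_hasPullback i i
      set ι₁ := pullback.fst i i with hι₁
      set ι₂ := pullback.snd i i with hι₂
      have FW : IsPullback (pullback.fst (f₁ ≫ u) ι₁) (pullback.snd (f₁ ≫ u) ι₁) (f₁ ≫ u) ι₁ :=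
        IsPullback.of_hasPullback (f₁ ≫ u) ι₁
      obtain ⟨f', hf'u, Ffc⟩ := kernel_face pbB FK FW
      haveI : IsIso f' := isIso_of_isPullback_self Ffc
      have top2 : IsPushout f' (pullback.snd (f₁ ≫ u) ι₁) (f₁ ≫ u) ι₂ :=
        stabB f' (pullback.snd (f₁ ≫ u) ι₁) (f₁ ≫ u) ι₂ (pullback.fst (f₁ ≫ u) ι₁) m₁ ι₁ i
          Ffc FW.flip pbB.flip FK.flip ⟨hf'u⟩
      haveI : IsIso ι₂ := isIso_of_isPushout_fst_isIso top2
      haveI monoI : Mono i := by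
        have hΔ₁ : FK.lift (𝟙 Y) (𝟙 Y) rfl ≫ ι₁ = 𝟙 Y := FK.lift_fst _ _ _
        have hΔ₂ : FK.lift (𝟙 Y) (𝟙 Y) rfl ≫ ι₂ = 𝟙 Y := FK.lift_snd _ _ _
        have hΔ : inv ι₂ = FK.lift (𝟙 Y) (𝟙 Y) rfl := IsIso.inv_eq_of_inv_hom_id hΔ₂
        have hι : ι₁ = ι₂ := by
          have h1 : inv ι₂ ≫ ι₁ = 𝟙 Y := by rw [hΔ, hΔ₁]
          calc ι₁ = (ι₂ ≫ inv ι₂) ≫ ι₁ := by rw [IsIso.hom_inv_id, Category.id_comp]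
            _ = ι₂ := by rw [Category.assoc, h1, Category.comp_id]
        refine ⟨fun α β w => ?_⟩
        have hk₁ : FK.lift α β w ≫ ι₁ = α := FK.lift_fst _ _ _
        have hk₂ : FK.lift α β w ≫ ι₂ = β := FK.lift_snd _ _ _
        calc α = FK.lift α β w ≫ ι₁ := hk₁.symm
          _ = FK.lift α β w ≫ ι₂ := congrArg (fun t => FK.lift α β w ≫ t) hι
          _ = β := hk₂
      -- Now the comparison with the pullback of `h` and `i` is an iso.
      have S : IsPullback (pullback.fst h i) (pullback.snd h i) h i :=
        IsPullback.of_hasPullback h i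
      set p₁ := pullback.fst h i with hp₁
      set p₂ := pullback.snd h i with hp₂
      obtain ⟨c, hc₁, hc₂⟩ : ∃ c, c ≫ p₁ = n' ∧ c ≫ p₂ = u :=
        ⟨S.lift n' u R.w, S.lift_fst _ _ _, S.lift_snd _ _ _⟩
      haveI monoP₁ : Mono p₁ := mono_fst_of_isPullback S
      have square1 : IsPullback m₁ (f₁ ≫ c) gA p₁ := by
        refine IsPullback.of_bot ?_ (by rw [Category.assoc, hc₁, pbL.w]) S
        have : (f₁ ≫ c) ≫ p₂ = f₁ ≫ u := by rw [Category.assoc, hc₂]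
        rw [this]
        exact pbB
      have faceY : IsPullback c (𝟙 W') p₁ n' := isPullback_id_left_of_mono hc₁
      have faceW : IsPullback (𝟙 _) (𝟙 _) m₁ m₁ := IsKernelPair.id_of_mono m₁
      have faceG : IsPullback f₁ (𝟙 _) (𝟙 W') f₁ := IsPullback.of_vert_isIso ⟨by simp⟩
      have top3 : IsPushout (𝟙 _) f₁ (f₁ ≫ c) c :=
        stabL (𝟙 _) f₁ (f₁ ≫ c) c (𝟙 _) m₁ (𝟙 W') p₁ faceW faceG square1.flip faceY ⟨by simp⟩
      haveI : IsIso c := isIso_of_isPushout_fst_isIso top3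
      have V1 : IsPullback n' c (𝟙 X') p₁ :=
        IsPullback.of_vert_isIso ⟨by rw [Category.comp_id, hc₁]⟩
      have final := V1.paste_vert S
      rw [hc₂, Category.id_comp] at final
      exact final
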